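/- Let Ω ⊂ ℝ^d be compact, let μ be a finite Borel measure on Ω that is singular with respect to the Lebesgue measure, and let (μ_n) be a sequence of finite Borel measures on Ω converging weakly to μ (i.e., ∫ f dμ_n → ∫ f dμ for every bounded continuous f). Then there exists a sequence of open sets (A_n) in ℝ^d such that (i) the Lebesgue measure of A_n tends to 0, and (ii) μ_n(Ω \ A_n) tends to 0. -/

import Mathlib

open MeasureTheory Filter Topology
open scoped ENNReal NNReal

/-- If `μ` is a finite Borel measure on a compact `Ω ⊆ ℝ^d`, singular with
respect to Lebesgue measure, and `μ_n ⇀ μ` weakly (testing against bounded continuous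
functions), then there are open sets `A_n` with `|A_n| → 0` and `μ_n(Ω \ A_n) → 0`. -/
theorem singular_weak_limit_concentration
    (d : ℕ) (Ω : Set (EuclideanSpace ℝ (Fin d))) (hΩ : IsCompact Ω)
    (μ : Measure (EuclideanSpace ℝ (Fin d))) (hμfin : IsFiniteMeasure μ)
    (hμΩ : μ Ωᶜ = 0) (hsing : μ ⟂ₘ volume)
    (μs : ℕ → Measure (EuclideanSpace ℝ (Fin d)))
    (hμsfin : ∀ n, IsFiniteMeasure (μs n))
    (hμsΩ : ∀ n, μs n Ωᶜ = 0)
    (hweak : ∀ f : BoundedContinuousFunction (EuclideanSpace ℝ (Fin d)) ℝ,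
      Tendsto (fun n => ∫ x, f x ∂(μs n)) atTop (𝓝 (∫ x, f x ∂μ))) :
    ∃ A : ℕ → Set (EuclideanSpace ℝ (Fin d)),
      (∀ n, IsOpen (A n)) ∧
      Tendsto (fun n => volume (A n)) atTop (𝓝 0) ∧
      Tendsto (fun n => μs n (Ω \ A n)) atTop (𝓝 0) := by
  haveI := hμfin
  haveI := hμsfin
  -- singularity: a set s with μ s = 0 and volume sᶜ = 0
  obtain ⟨s, s_meas, hμs0, hvs0⟩ := hsing
  -- small-scale tolerances
  set ε : ℕ → ℝ≥0∞ := fun k => (2 : ℝ≥0∞)⁻¹ ^ k with hε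
  have ε_pos : ∀ k, 0 < ε k := fun k => by
    simp [hε, ENNReal.pow_pos, ENNReal.inv_pos]
  have ε_tendsto : Tendsto ε atTop (𝓝 0) :=
    ENNReal.tendsto_pow_atTop_nhds_zero_of_lt_one (by norm_num)
  -- choose open sets U k ⊇ sᶜ of volume < ε k
  have hU : ∀ k, ∃ U : Set (EuclideanSpace ℝ (Fin d)),
      sᶜ ⊆ U ∧ IsOpen U ∧ volume U < ε k := by
    intro k
    exact Set.exists_isOpen_lt_of_lt sᶜ (ε k) (by simp [hvs0, ε_pos k])
  choose U hUsub hUopen hUvol using hU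
  -- weak convergence as convergence of finite measures
  set ν : FiniteMeasure (EuclideanSpace ℝ (Fin d)) := ⟨μ, hμfin⟩ with hν
  set νs : ℕ → FiniteMeasure (EuclideanSpace ℝ (Fin d)) := fun n => ⟨μs n, hμsfin n⟩ with hνs
  have hconv : Tendsto νs atTop (𝓝 ν) :=
    FiniteMeasure.tendsto_iff_forall_integral_tendsto.mpr hweak
  -- for each k, μs n (Ω \ U k) → 0
  have key : ∀ k, Tendsto (fun n => μs n (Ω \ U k)) atTop (𝓝 0) := by
    intro k
    have hF : IsClosed (Ω \ U k) := hΩ.isClosed.sdiff (hUopen k)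
    have hlim : Filter.limsup (fun n => (νs n : Measure _) (Ω \ U k)) atTop
        ≤ (ν : Measure _) (Ω \ U k) :=
      FiniteMeasure.limsup_measure_closed_le_of_tendsto hconv hF
    have hμ0 : μ (Ω \ U k) = 0 := by
      apply measure_mono_null _ hμs0
      intro x hx
      by_contra hxs
      exact hx.2 (hUsub k hxs)
    have hlim' : Filter.limsup (fun n => μs n (Ω \ U k)) atTop ≤ (0 : ℝ≥0∞) := by
      calc Filter.limsup (fun n => μs n (Ω \ U k)) atTop
          ≤ (ν : Measure _) (Ω \ U k) := hlim
        _ = 0 := hμ0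
    exact tendsto_of_le_liminf_of_limsup_le (by simp) hlim'
  -- choose thresholds
  have hN : ∀ k, ∃ N : ℕ, ∀ n ≥ N, μs n (Ω \ U k) < ε k := by
    intro k
    exact eventually_atTop.mp ((key k).eventually_lt_const (ε_pos k))
  choose N hNspec using hN
  -- diagonal index
  set K : ℕ → ℕ := fun n => Nat.findGreatest (fun j => N j ≤ n) n with hK
  have hKtendsto : Tendsto K atTop atTop := by
    rw [tendsto_atTop_atTop]
    intro k
    refine ⟨max (N k) k, fun n hn => ?_⟩
    exact Nat.le_findGreatest (le_trans (le_max_right _ _) hn)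
      (le_trans (le_max_left _ _) hn)
  refine ⟨fun n => U (K n), fun n => hUopen _, ?_, ?_⟩
  · -- volume tendsto
    refine tendsto_of_tendsto_of_tendsto_of_le_of_le tendsto_const_nhds
      (ε_tendsto.comp hKtendsto) (fun n => zero_le) (fun n => (hUvol (K n)).le)
  · -- measure of complement tendsto
    refine tendsto_of_tendsto_of_tendsto_of_le_of_le' tendsto_const_nhds
      (ε_tendsto.comp hKtendsto) (Eventually.of_forall fun n => zero_le) ?_
    filter_upwards [eventually_ge_atTop (N 0)] with n hn
    have hKspec : N (K n) ≤ n :=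
      Nat.findGreatest_spec (P := fun j => N j ≤ n) (Nat.zero_le n) hn
    exact (hNspec (K n) n hKspec).le
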